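/- For α > 2 and N > 0, the function β ↦ log(1+β)·e^{−1}/(N·β^{2/α}) on (0,∞) has a unique critical point β* satisfying α/2 = (1 + 1/β*)·log(1 + β*), and this is its unique global maximum. -/

import Mathlib

open Real Set

noncomputable def gfun (x : ℝ) : ℝ := (1 + 1 / x) * Real.log (1 + x)

lemma log_lt' {x : ℝ} (hx : 0 < x) : Real.log (1 + x) < x := by
  have := Real.log_lt_sub_one_of_pos (by linarith : (0:ℝ) < 1 + x) (by linarith)
  linarith

lemma log_pos' {x : ℝ} (hx : 0 < x) : 0 < Real.log (1 + x) :=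
  Real.log_pos (by linarith)

lemma g_hasDeriv {x : ℝ} (hx : 0 < x) :
    HasDerivAt gfun (x⁻¹ - Real.log (1 + x) / x ^ 2) x := by
  have h1 : HasDerivAt (fun t : ℝ => 1 + 1 / t) (-(x ^ 2)⁻¹) x := by
    simpa [one_div] using ((hasDerivAt_inv hx.ne').const_add 1)
  have h2 : HasDerivAt (fun t : ℝ => Real.log (1 + t)) (1 + x)⁻¹ x := by
    have h0 : HasDerivAt (fun t : ℝ => 1 + t) 1 x := (hasDerivAt_id x).const_add 1
    simpa [Function.comp_def] using (Real.hasDerivAt_log (by linarith : (1:ℝ) + x ≠ 0)).comp x h0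
  have : HasDerivAt gfun (-(x ^ 2)⁻¹ * Real.log (1 + x) + (1 + 1 / x) * (1 + x)⁻¹) x :=
    h1.mul h2
  convert this using 1
  have hx1 : (1:ℝ) + x ≠ 0 := by linarith
  field_simp
  ring

lemma g_contOn : ContinuousOn gfun (Ioi 0) := by
  intro x hx
  exact ((g_hasDeriv hx).continuousAt.continuousWithinAt)

lemma g_mono : StrictMonoOn gfun (Ioi 0) := by
  apply strictMonoOn_of_deriv_pos (convex_Ioi 0) g_contOn
  intro x hx
  rw [interior_Ioi] at hx
  have hx' : (0:ℝ) < x := hx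
  rw [(g_hasDeriv hx').deriv]
  have h1 : Real.log (1 + x) < x := log_lt' hx'
  have hx2 : (0:ℝ) < x ^ 2 := by positivity
  rw [sub_pos, div_lt_iff₀ hx2]
  have he : x⁻¹ * x ^ 2 = x := by field_simp
  rw [he]
  exact h1

lemma exists_beta {α : ℝ} (hα : 2 < α) : ∃ β, 0 < β ∧ gfun β = α / 2 := by
  set a : ℝ := (α / 2 - 1) / 2 with ha_def
  have ha : 0 < a := by simp only [ha_def]; linarith
  set b : ℝ := Real.exp (α / 2) - 1 with hb_def
  have hexp : α / 2 + 1 < Real.exp (α / 2) := by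
    have := Real.add_one_lt_exp (by positivity : (α/2 : ℝ) ≠ 0)
    linarith
  have hab : a < b := by simp only [ha_def, hb_def]; linarith
  have hb : 0 < b := lt_trans ha hab
  have hga : gfun a ≤ α / 2 := by
    have h1 : gfun a < (1 + 1 / a) * a :=
      mul_lt_mul_of_pos_left (log_lt' ha) (by positivity)
    have h2 : (1 + 1 / a) * a = a + 1 := by field_simp
    rw [h2] at h1
    simp only [ha_def] at h1 ⊢
    linarith
  have hgb : α / 2 ≤ gfun b := by
    have hL : Real.log (1 + b) = α / 2 := by
      simp only [hb_def]
      rw [show (1 : ℝ) + (Real.exp (α / 2) - 1) = Real.exp (α / 2) by ring,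
        Real.log_exp]
    have : Real.log (1 + b) ≤ (1 + 1 / b) * Real.log (1 + b) := by
      nlinarith [log_pos' hb, one_div_pos.mpr hb]
    rw [hL] at this
    simpa [gfun, hL] using this
  have hsub : Icc a b ⊆ Ioi 0 := fun x hx => lt_of_lt_of_le ha hx.1
  obtain ⟨β, hβmem, hβ⟩ := intermediate_value_Icc hab.le (g_contOn.mono hsub)
    ⟨hga, hgb⟩
  exact ⟨β, lt_of_lt_of_le ha hβmem.1, hβ⟩

noncomputable def Hfun (α x : ℝ) : ℝ :=
  Real.log (Real.log (1 + x)) - 2 / α * Real.log x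

lemma H_hasDeriv {α x : ℝ} (hx : 0 < x) :
    HasDerivAt (Hfun α) ((Real.log (1 + x))⁻¹ * (1 + x)⁻¹ - 2 / α * x⁻¹) x := by
  have h0 : HasDerivAt (fun t : ℝ => 1 + t) 1 x := (hasDerivAt_id x).const_add 1
  have h2 : HasDerivAt (fun t : ℝ => Real.log (1 + t)) (1 + x)⁻¹ x := by
    simpa [Function.comp_def] using (Real.hasDerivAt_log (by linarith : (1:ℝ) + x ≠ 0)).comp x h0
  have h3 : HasDerivAt (fun t : ℝ => Real.log (Real.log (1 + t)))
      ((Real.log (1 + x))⁻¹ * (1 + x)⁻¹) x :=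
    by simpa [Function.comp_def] using (Real.hasDerivAt_log (log_pos' hx).ne').comp x h2
  have h4 : HasDerivAt (fun t : ℝ => 2 / α * Real.log t) (2 / α * x⁻¹) x :=
    (Real.hasDerivAt_log hx.ne').const_mul (2 / α)
  exact h3.sub h4

lemma H_contOn {α : ℝ} : ContinuousOn (Hfun α) (Ioi 0) := fun x hx =>
  (H_hasDeriv (α := α) hx).continuousAt.continuousWithinAt

lemma key_pos {α x : ℝ} (hα : 0 < α) (hx : 0 < x) (h : gfun x < α / 2) :
    0 < (Real.log (1 + x))⁻¹ * (1 + x)⁻¹ - 2 / α * x⁻¹ := by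
  have hL := log_pos' hx
  have h' : (x + 1) * Real.log (1 + x) < α / 2 * x := by
    rw [gfun, show (1:ℝ) + 1 / x = (x + 1) / x by field_simp,
      div_mul_eq_mul_div, div_lt_iff₀ hx] at h
    exact h
  have e1 : 2 / α * x⁻¹ = 2 / (α * x) := by field_simp
  have e2 : (Real.log (1 + x))⁻¹ * (1 + x)⁻¹ = 1 / ((1 + x) * Real.log (1 + x)) := by
    rw [one_div, mul_inv]; ring
  rw [sub_pos, e1, e2, div_lt_div_iff₀ (by positivity) (by positivity)]
  nlinarith [h']

lemma key_neg {α x : ℝ} (hα : 0 < α) (hx : 0 < x) (h : α / 2 < gfun x) :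
    (Real.log (1 + x))⁻¹ * (1 + x)⁻¹ - 2 / α * x⁻¹ < 0 := by
  have hL := log_pos' hx
  have h' : α / 2 * x < (x + 1) * Real.log (1 + x) := by
    rw [gfun, show (1:ℝ) + 1 / x = (x + 1) / x by field_simp,
      div_mul_eq_mul_div, lt_div_iff₀ hx] at h
    exact h
  have e1 : 2 / α * x⁻¹ = 2 / (α * x) := by field_simp
  have e2 : (Real.log (1 + x))⁻¹ * (1 + x)⁻¹ = 1 / ((1 + x) * Real.log (1 + x)) := by
    rw [one_div, mul_inv]; ring
  rw [sub_neg, e1, e2, div_lt_div_iff₀ (by positivity) (by positivity)]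
  nlinarith [h']

lemma H_mono {α β : ℝ} (hβ : 0 < β) (hα : 0 < α) (hcrit : gfun β = α / 2) :
    StrictMonoOn (Hfun α) (Ioc 0 β) := by
  apply strictMonoOn_of_deriv_pos (convex_Ioc 0 β)
    (H_contOn.mono (fun x hx => hx.1))
  intro x hx
  rw [interior_Ioc] at hx
  rw [(H_hasDeriv hx.1).deriv]
  exact key_pos hα hx.1 (hcrit ▸ g_mono hx.1 hβ hx.2)

lemma H_anti {α β : ℝ} (hβ : 0 < β) (hα : 0 < α) (hcrit : gfun β = α / 2) :
    StrictAntiOn (Hfun α) (Ici β) := by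
  apply strictAntiOn_of_deriv_neg (convex_Ici β)
    (H_contOn.mono (fun x hx => lt_of_lt_of_le hβ hx))
  intro x hx
  rw [interior_Ici] at hx
  have hx' : 0 < x := lt_trans hβ hx
  rw [(H_hasDeriv hx').deriv]
  exact key_neg hα hx' (hcrit ▸ g_mono hβ hx' hx)

lemma f_eq {α N x : ℝ} (hN : 0 < N) (hx : 0 < x) :
    Real.log (1 + x) * Real.exp (-1) / (N * x ^ (2 / α)) =
      Real.exp (-1) / N * Real.exp (Hfun α x) := by
  rw [Hfun, Real.exp_sub, Real.exp_log (log_pos' hx), Real.rpow_def_of_pos hx,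
    mul_comm (Real.log x) (2 / α)]
  have h1 : Real.exp (2 / α * Real.log x) ≠ 0 := Real.exp_ne_zero _
  field_simp

theorem unique_optimal_beta (α N : ℝ) (hα : 2 < α) (hN : 0 < N) :
    (∃! β : ℝ, 0 < β ∧ α / 2 = (1 + 1 / β) * Real.log (1 + β)) ∧
    ∀ β : ℝ, 0 < β → α / 2 = (1 + 1 / β) * Real.log (1 + β) →
      ∀ x ∈ Set.Ioi (0 : ℝ), x ≠ β →
        Real.log (1 + x) * Real.exp (-1) / (N * x ^ (2 / α)) <
        Real.log (1 + β) * Real.exp (-1) / (N * β ^ (2 / α)) := by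
  have hα0 : (0:ℝ) < α := by linarith
  constructor
  · obtain ⟨β, hβpos, hβ⟩ := exists_beta hα
    refine ⟨β, ⟨hβpos, hβ.symm⟩, ?_⟩
    rintro y ⟨hy, hy2⟩
    exact g_mono.injOn hy hβpos (by rw [gfun, ← hy2, ← hβ])
  · intro β hβ hcrit x hx hne
    have hx' : (0:ℝ) < x := hx
    have hcrit' : gfun β = α / 2 := hcrit.symm
    have hH : Hfun α x < Hfun α β := by
      rcases lt_or_gt_of_ne hne with h | h
      · exact H_mono hβ hα0 hcrit' ⟨hx', h.le⟩ ⟨hβ, le_refl β⟩ h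
      · exact H_anti hβ hα0 hcrit' (le_refl β) h.le h
    rw [f_eq hN hx', f_eq hN hβ]
    exact mul_lt_mul_of_pos_left (Real.exp_lt_exp.2 hH) (by positivity)
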